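/- For integers d ≥ 2 and k ≥ 1, the diameter of the d-Fibonacci digraph F(d,k) is k + d − 2: for every pair of vertices x, y of F(d,k) there is a directed walk from x to y of length at most k + d − 2, and there exist vertices x, y such that every directed walk from x to y has length at least k + d − 2. -/
import Mathlib


/-- A vertex of the d-Fibonacci digraph F(d,k): a sequence x : Fin k → ZMod d
such that whenever a digit is nonzero, the next digit is its successor mod d. -/
def fibIsVertex (d k : ℕ) (x : Fin k → ZMod d) : Prop :=
  ∀ (i : ℕ) (h : i + 1 < k),
    x ⟨i, Nat.lt_of_succ_lt h⟩ ≠ 0 →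
      x ⟨i + 1, h⟩ = x ⟨i, Nat.lt_of_succ_lt h⟩ + 1

/-- The arc relation of F(d,k): y is the left shift of x, and if the last digit
of x is nonzero then the last digit of y is its successor mod d. -/
def fibArc (d k : ℕ) (x y : Fin k → ZMod d) : Prop :=
  (∀ (i : ℕ) (h : i + 1 < k), y ⟨i, Nat.lt_of_succ_lt h⟩ = x ⟨i + 1, h⟩) ∧
  (∀ h : 0 < k, x ⟨k - 1, Nat.sub_lt h Nat.one_pos⟩ ≠ 0 →
    y ⟨k - 1, Nat.sub_lt h Nat.one_pos⟩ = x ⟨k - 1, Nat.sub_lt h Nat.one_pos⟩ + 1)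

/-- There is a directed walk of length l from x to y in F(d,k). -/
def fibWalk (d k : ℕ) (x y : Fin k → ZMod d) (l : ℕ) : Prop :=
  ∃ v : ℕ → (Fin k → ZMod d), v 0 = x ∧ v l = y ∧
    (∀ i ≤ l, fibIsVertex d k (v i)) ∧ ∀ i < l, fibArc d k (v i) (v (i + 1))

lemma walk_of_stream (d k : ℕ) (hk : 1 ≤ k) (x y : Fin k → ZMod d) (l : ℕ)
    (s : ℕ → ZMod d)
    (hx : ∀ j : Fin k, s j = x j)
    (hy : ∀ j : Fin k, s (l + j) = y j)
    (hs : ∀ m, m + 2 ≤ l + k → s m ≠ 0 → s (m + 1) = s m + 1) :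
    fibWalk d k x y l := by
  refine ⟨fun t j => s (t + j), ?_, ?_, ?_, ?_⟩
  · funext j; simpa using hx j
  · funext j; simpa using hy j
  · intro i hi p hp hne
    have := hs (i + p) (by omega) (by simpa using hne)
    simpa [show i + (p + 1) = i + p + 1 by omega] using this
  · intro i hi
    constructor
    · intro p hp
      simp [show i + 1 + p = i + (p + 1) by omega]
    · intro h0 hne
      have := hs (i + (k - 1)) (by omega) (by simpa using hne)
      simpa [show i + 1 + (k - 1) = i + (k - 1) + 1 by omega] using this

lemma fib_upper (d k : ℕ) (hd : 2 ≤ d) (hk : 1 ≤ k)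
    (x y : Fin k → ZMod d) (hx : fibIsVertex d k x) (hy : fibIsVertex d k y) :
    ∃ l ≤ k + d - 2, fibWalk d k x y l := by
  haveI : NeZero d := ⟨by omega⟩
  set X : ℕ → ZMod d := fun i => if h : i < k then x ⟨i, h⟩ else 0 with hX
  set Y : ℕ → ZMod d := fun i => if h : i < k then y ⟨i, h⟩ else 0 with hY
  have hXv : ∀ i, i + 1 < k → X i ≠ 0 → X (i + 1) = X i + 1 := by
    intro i h hne
    have := hx i h
    simp only [hX, dif_pos (Nat.lt_of_succ_lt h), dif_pos h] at *
    exact this hne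
  have hYv : ∀ i, i + 1 < k → Y i ≠ 0 → Y (i + 1) = Y i + 1 := by
    intro i h hne
    have := hy i h
    simp only [hY, dif_pos (Nat.lt_of_succ_lt h), dif_pos h] at *
    exact this hne
  have hXj : ∀ j : Fin k, X j = x j := by
    intro j; simp only [hX, dif_pos j.isLt]
  have hYj : ∀ j : Fin k, Y j = y j := by
    intro j; simp only [hY, dif_pos j.isLt]
  set a : ZMod d := X (k - 1) with ha
  set b : ZMod d := Y 0 with hb
  by_cases haz : a = 0
  · -- case A: length k
    refine ⟨k, by omega, ?_⟩
    set s : ℕ → ZMod d := fun j => if j < k then X j else Y (j - k) with hsdef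
    apply walk_of_stream d k hk x y k s
    · intro j; simp only [hsdef, if_pos j.isLt]; exact hXj j
    · intro j
      have h1 : ¬ (k + (j : ℕ) < k) := by omega
      simp only [hsdef, if_neg h1, show k + (j : ℕ) - k = j by omega]
      exact hYj j
    · intro m hm hne
      by_cases h1 : m + 1 < k
      · simp only [hsdef, if_pos h1, if_pos (Nat.lt_of_succ_lt h1)] at *
        exact hXv m h1 hne
      · by_cases h2 : m < k
        · exfalso
          have hm1 : m = k - 1 := by omega
          rw [hm1] at hne
          simp only [hsdef, if_pos (show k - 1 < k by omega)] at hne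
          exact hne haz
        · have h3 : ¬ (m + 1 < k) := by omega
          simp only [hsdef, if_neg h2, if_neg h3,
            show m + 1 - k = m - k + 1 by omega] at *
          exact hYv (m - k) (by omega) hne
  · by_cases hba : b = a
    · -- case B: overlap, length k - 1
      refine ⟨k - 1, by omega, ?_⟩
      set s : ℕ → ZMod d := fun j => if j < k then X j else Y (j - (k - 1)) with hsdef
      apply walk_of_stream d k hk x y (k - 1) s
      · intro j; simp only [hsdef, if_pos j.isLt]; exact hXj j
      · intro j
        by_cases h1 : k - 1 + (j : ℕ) < k
        · have hj0 : (j : ℕ) = 0 := by omega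
          have e1 : s (k - 1 + (j : ℕ)) = X (k - 1) := by
            simp only [hsdef, hj0]
            rw [if_pos (show k - 1 + 0 < k by omega)]
            norm_num
          rw [e1, ← ha, ← hba, hb, ← hj0]
          exact hYj j
        · simp only [hsdef, if_neg h1, show k - 1 + (j : ℕ) - (k - 1) = j by omega]
          exact hYj j
      · intro m hm hne
        by_cases h1 : m + 1 < k
        · simp only [hsdef, if_pos h1, if_pos (Nat.lt_of_succ_lt h1)] at *
          exact hXv m h1 hne
        · by_cases h2 : m < k
          · -- m = k - 1, k ≥ 2
            have hm1 : m = k - 1 := by omega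
            have hk2 : 2 ≤ k := by omega
            have e1 : s m = X (k - 1) := by
              simp only [hsdef, hm1]
              rw [if_pos (show k - 1 < k by omega)]
            have e2 : s (m + 1) = Y 1 := by
              simp only [hsdef, if_neg (show ¬ (m + 1 < k) by omega),
                show m + 1 - (k - 1) = 1 by omega]
            rw [e1, e2, ← ha, ← hba, hb]
            exact hYv 0 (by omega) (by rw [← hb, hba]; exact haz)
          · have e1 : s m = Y (m - (k - 1)) := by
              simp only [hsdef, if_neg h2]
            have e2 : s (m + 1) = Y (m - (k - 1) + 1) := by
              simp only [hsdef, if_neg (show ¬ (m + 1 < k) by omega),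
                show m + 1 - (k - 1) = m - (k - 1) + 1 by omega]
            rw [e1, e2]
            rw [e1] at hne
            exact hYv (m - (k - 1)) (by omega) hne
    · -- case C: length k + t0
      set t0 : ℕ := (b - a - 1).val with ht0def
      have ht0d : t0 < d := ZMod.val_lt _
      have hcast : ((t0 : ℕ) : ZMod d) = b - a - 1 := by
        simp [ht0def, ZMod.natCast_val, ZMod.cast_id]
      have key : a + (t0 : ZMod d) + 1 = b := by rw [hcast]; ring
      have ht0 : t0 ≤ d - 2 := by
        by_contra hc
        have : t0 = d - 1 := by omega
        apply hba
        have : ((t0 : ℕ) : ZMod d) = -1 := by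
          rw [this]
          push_cast [Nat.cast_sub (show 1 ≤ d by omega)]
          simp
        rw [this] at hcast
        linear_combination -hcast
      refine ⟨k + t0, by omega, ?_⟩
      set s : ℕ → ZMod d := fun j => if j < k then X j
        else if j ≤ k - 1 + t0 then a + ((j - (k - 1) : ℕ) : ZMod d)
        else Y (j - (k + t0)) with hsdef
      apply walk_of_stream d k hk x y (k + t0) s
      · intro j; simp only [hsdef, if_pos j.isLt]; exact hXj j
      · intro j
        have e1 : s (k + t0 + (j : ℕ)) = Y j := by
          simp only [hsdef, if_neg (show ¬ (k + t0 + (j : ℕ) < k) by omega),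
            if_neg (show ¬ (k + t0 + (j : ℕ) ≤ k - 1 + t0) by omega),
            show k + t0 + (j : ℕ) - (k + t0) = j by omega]
        rw [e1]; exact hYj j
      · intro m hm hne
        by_cases h1 : m + 1 < k
        · simp only [hsdef, if_pos h1, if_pos (Nat.lt_of_succ_lt h1)] at *
          exact hXv m h1 hne
        · by_cases h2 : m < k
          · -- m = k - 1
            have hm1 : m = k - 1 := by omega
            have e1 : s m = X (k - 1) := by
              simp only [hsdef, hm1]
              rw [if_pos (show k - 1 < k by omega)]
            rw [e1, ← ha]
            by_cases h3 : 1 ≤ t0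
            · have e2 : s (m + 1) = a + ((1 : ℕ) : ZMod d) := by
                simp only [hsdef, if_neg (show ¬ (m + 1 < k) by omega),
                  if_pos (show m + 1 ≤ k - 1 + t0 by omega),
                  show m + 1 - (k - 1) = 1 by omega]
              rw [e2]; norm_num
            · have ht00 : t0 = 0 := by omega
              have e2 : s (m + 1) = Y 0 := by
                simp only [hsdef, if_neg (show ¬ (m + 1 < k) by omega),
                  if_neg (show ¬ (m + 1 ≤ k - 1 + t0) by omega),
                  show m + 1 - (k + t0) = 0 by omega]
              rw [e2, ← hb, ← key, ht00]
              norm_num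
          · by_cases h3 : m ≤ k - 1 + t0
            · have e1 : s m = a + ((m - (k - 1) : ℕ) : ZMod d) := by
                simp only [hsdef, if_neg h2, if_pos h3]
              by_cases h4 : m + 1 ≤ k - 1 + t0
              · have e2 : s (m + 1) = a + ((m - (k - 1) + 1 : ℕ) : ZMod d) := by
                  simp only [hsdef, if_neg (show ¬ (m + 1 < k) by omega),
                    if_pos h4, show m + 1 - (k - 1) = m - (k - 1) + 1 by omega]
                rw [e1, e2]; push_cast; ring
              · -- m = k - 1 + t0
                have hm1 : m - (k - 1) = t0 := by omega
                have e2 : s (m + 1) = Y 0 := by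
                  simp only [hsdef, if_neg (show ¬ (m + 1 < k) by omega),
                    if_neg h4, show m + 1 - (k + t0) = 0 by omega]
                rw [e1, e2, ← hb, ← key, hm1]
            · have e1 : s m = Y (m - (k + t0)) := by
                simp only [hsdef, if_neg h2, if_neg h3]
              have e2 : s (m + 1) = Y (m - (k + t0) + 1) := by
                simp only [hsdef, if_neg (show ¬ (m + 1 < k) by omega),
                  if_neg (show ¬ (m + 1 ≤ k - 1 + t0) by omega),
                  show m + 1 - (k + t0) = m - (k + t0) + 1 by omega]
              rw [e1, e2]
              rw [e1] at hne
              exact hYv (m - (k + t0)) (by omega) hne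

lemma fib_lower (d k : ℕ) (hd : 2 ≤ d) (hk : 1 ≤ k) :
    ∃ x y : Fin k → ZMod d, fibIsVertex d k x ∧ fibIsVertex d k y ∧
      ∀ l : ℕ, fibWalk d k x y l → k + d - 2 ≤ l := by
  haveI : NeZero d := ⟨by omega⟩
  refine ⟨fun j => if (j : ℕ) = k - 1 then 1 else 0, fun _ => 0, ?_, ?_, ?_⟩
  · intro i h hne
    exfalso; apply hne
    simp only [if_neg (show ¬ i = k - 1 by omega)]
  · intro i h hne
    exact absurd rfl hne
  · rintro l ⟨v, hv0, hvl, hvert, harc⟩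
    by_contra hc
    push_neg at hc
    have hl : l ≤ k + d - 3 := by omega
    set W : ℕ → ℕ → ZMod d := fun i p => if h : p < k then v i ⟨p, h⟩ else 0 with hW
    have arc1 : ∀ i, i < l → ∀ p, p + 1 < k → W (i + 1) p = W i (p + 1) := by
      intro i hi p hp
      have := (harc i hi).1 p hp
      simp only [hW, dif_pos (Nat.lt_of_succ_lt hp), dif_pos hp]
      exact this
    have arc2 : ∀ i, i < l → W i (k - 1) ≠ 0 → W (i + 1) (k - 1) = W i (k - 1) + 1 := by
      intro i hi hne
      have h1 : k - 1 < k := by omega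
      simp only [hW, dif_pos h1] at *
      exact (harc i hi).2 (by omega) hne
    have w0 : W 0 (k - 1) = 1 := by
      simp only [hW, dif_pos (show k - 1 < k by omega), hv0]
      simp
    have wl : ∀ p, p < k → W l p = 0 := by
      intro p hp
      simp only [hW, dif_pos hp, hvl]
    have shift : ∀ t i p, i + t ≤ l → p + t < k → W (i + t) p = W i (p + t) := by
      intro t
      induction t with
      | zero => intro i p _ _; simp
      | succ n ih =>
        intro i p h1 h2
        have e1 : W (i + n + 1) p = W (i + n) (p + 1) :=
          arc1 (i + n) (by omega) p (by omega)
        have e2 : W (i + n) (p + 1) = W i (p + 1 + n) := ih i (p + 1) (by omega) (by omega)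
        rw [show i + (n + 1) = i + n + 1 by omega, e1, e2,
          show p + 1 + n = p + (n + 1) by omega]
    have ulem : ∀ i, i ≤ l → i ≤ d - 2 → W i (k - 1) = ((1 + i : ℕ) : ZMod d) := by
      intro i
      induction i with
      | zero => intro _ _; simpa using w0
      | succ n ih =>
        intro h1 h2
        have hn : W n (k - 1) = ((1 + n : ℕ) : ZMod d) := ih (by omega) (by omega)
        have hne : W n (k - 1) ≠ 0 := by
          rw [hn]
          intro h0
          have := ZMod.val_cast_of_lt (show 1 + n < d by omega)
          rw [h0] at this
          simp at this
          omega
        rw [arc2 n (by omega) hne, hn]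
        push_cast
        ring
    -- contradiction
    have hi2 : l - (k - 1) + (l - (l - (k - 1))) = l := by omega
    have key := shift (l - (l - (k - 1))) (l - (k - 1)) (k - 1 - (l - (l - (k - 1))))
      (by omega) (by omega)
    rw [hi2, show k - 1 - (l - (l - (k - 1))) + (l - (l - (k - 1))) = k - 1 by omega] at key
    rw [wl _ (by omega)] at key
    have := ulem (l - (k - 1)) (by omega) (by omega)
    rw [this] at key
    have := ZMod.val_cast_of_lt (show 1 + (l - (k - 1)) < d by omega)
    rw [← key] at this
    simp at this
    omega


/-- the diameter of F(d,k) is k + d − 2. -/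
theorem fib_diameter (d k : ℕ) (hd : 2 ≤ d) (hk : 1 ≤ k) :
    (∀ x y : Fin k → ZMod d, fibIsVertex d k x → fibIsVertex d k y →
      ∃ l ≤ k + d - 2, fibWalk d k x y l) ∧
    (∃ x y : Fin k → ZMod d, fibIsVertex d k x ∧ fibIsVertex d k y ∧
      ∀ l : ℕ, fibWalk d k x y l → k + d - 2 ≤ l) := by
  exact ⟨fun x y hx hy => fib_upper d k hd hk x y hx hy, fib_lower d k hd hk⟩
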